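/- Let C be a bounded convex subset with diameter at most M (M ∈ ℤ₊) of a W-hyperbolic space, T : C → C nonexpansive, and (x_n) the Halpern iteration for u, x ∈ C and (λ_n) in [0,1]. Assume α is a rate of convergence of (λ_n) to 0, β is a Cauchy modulus of s_n = ∑_{i=1}^n |λ_{i+1} − λ_i|, and θ is a rate of divergence of ∑_{n=1}^∞ λ_{n+1}. Then for all ε ∈ (0,2) and all n ≥ θ(β(ε/(4M)) + 1 + ⌈ln(2M/ε)⌉) + 1, d(x_n, x_{n+1}) ≤ ε. -/

import Mathlib

structure WHyperbolic (X : Type*) [MetricSpace X] where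
  W : X → X → ℝ → X
  W1 : ∀ (x y z : X) (l : ℝ), l ∈ Set.Icc (0:ℝ) 1 →
    dist z (W x y l) ≤ (1 - l) * dist z x + l * dist z y
  W2 : ∀ (x y : X) (l l' : ℝ), l ∈ Set.Icc (0:ℝ) 1 → l' ∈ Set.Icc (0:ℝ) 1 →
    dist (W x y l) (W x y l') = |l - l'| * dist x y
  W3 : ∀ (x y : X) (l : ℝ), l ∈ Set.Icc (0:ℝ) 1 → W x y l = W y x (1 - l)
  W4 : ∀ (x y z w : X) (l : ℝ), l ∈ Set.Icc (0:ℝ) 1 →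
    dist (W x z l) (W y w l) ≤ (1 - l) * dist x y + l * dist z w

theorem stmt12 {X : Type*} [MetricSpace X] (H : WHyperbolic X) (C : Set X)
    (hconv : ∀ x ∈ C, ∀ y ∈ C, ∀ l : ℝ, l ∈ Set.Icc (0:ℝ) 1 → H.W x y l ∈ C)
    (M : ℕ) (hM : 0 < M) (hdiam : ∀ a ∈ C, ∀ b ∈ C, dist a b ≤ M)
    (T : X → X) (hTC : ∀ x ∈ C, T x ∈ C)
    (hT : ∀ x ∈ C, ∀ y ∈ C, dist (T x) (T y) ≤ dist x y)
    (u x0 : X) (hu : u ∈ C) (hx0 : x0 ∈ C)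
    (lam : ℕ → ℝ) (hlam : ∀ n, 1 ≤ n → lam n ∈ Set.Icc (0:ℝ) 1)
    (x : ℕ → X) (hx : x 0 = x0)
    (hiter : ∀ n : ℕ, x (n+1) = H.W u (T (x n)) (1 - lam (n+1)))
    (α β : ℝ → ℕ) (θ : ℕ → ℕ)
    (hα : ∀ δ : ℝ, 0 < δ → ∀ n, α δ ≤ n → lam n ≤ δ)
    (hβ : ∀ δ : ℝ, 0 < δ → ∀ n : ℕ,
      (∑ i ∈ Finset.Icc 1 (β δ + n), |lam (i+1) - lam i|)
        - (∑ i ∈ Finset.Icc 1 (β δ), |lam (i+1) - lam i|) ≤ δ)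
    (hθ : ∀ n : ℕ, 1 ≤ n → (n : ℝ) ≤ ∑ k ∈ Finset.Icc 1 (θ n), lam (k+1)) :
    ∀ ε : ℝ, ε ∈ Set.Ioo (0:ℝ) 2 →
      ∀ n : ℕ, θ (β (ε / (4 * M)) + 1 + ⌈Real.log (2 * M / ε)⌉₊) + 1 ≤ n →
        dist (x n) (x (n+1)) ≤ ε := by
  intro ε hε n hn
  obtain ⟨hε0, hε2⟩ := hε
  have hMpos : (0:ℝ) < (M:ℝ) := by exact_mod_cast hM
  set δ : ℝ := ε / (4 * M) with hδdef
  have hδpos : 0 < δ := by positivity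
  set N : ℕ := β δ + 1 with hNdef
  set c : ℕ := ⌈Real.log (2 * M / ε)⌉₊ with hcdef
  set m : ℕ := β δ + 1 + c with hmdef
  have hlam0 : ∀ k : ℕ, 0 ≤ lam (k+1) := fun k => (hlam (k+1) (by omega)).1
  have hlam1 : ∀ k : ℕ, lam (k+1) ≤ 1 := fun k => (hlam (k+1) (by omega)).2
  have hxC : ∀ k, x k ∈ C := by
    intro k
    induction k with
    | zero => rw [hx]; exact hx0
    | succ k ih =>
      rw [hiter]
      exact hconv u hu _ (hTC _ ih) _ ⟨by linarith [hlam1 k], by linarith [hlam0 k]⟩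
  have hdistM : ∀ i j, dist (x i) (x j) ≤ M := fun i j => hdiam _ (hxC i) _ (hxC j)
  have hrec : ∀ k, dist (x (k+1)) (x (k+2)) ≤
      (1 - lam (k+2)) * dist (x k) (x (k+1)) + M * |lam (k+2) - lam (k+1)| := by
    intro k
    have hmem1 : (1 - lam (k+1)) ∈ Set.Icc (0:ℝ) 1 :=
      ⟨by linarith [hlam1 k], by linarith [hlam0 k]⟩
    have hmem2 : (1 - lam (k+2)) ∈ Set.Icc (0:ℝ) 1 :=
      ⟨by linarith [hlam1 (k+1)], by linarith [hlam0 (k+1)]⟩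
    have h2 := H.W2 u (T (x k)) _ _ hmem1 hmem2
    have h4 := H.W4 u u (T (x k)) (T (x (k+1))) _ hmem2
    have habs : |(1 - lam (k+1)) - (1 - lam (k+2))| = |lam (k+2) - lam (k+1)| := by
      congr 1; ring
    have hdu : dist u (T (x k)) ≤ M := hdiam _ hu _ (hTC _ (hxC k))
    have hTd : dist (T (x k)) (T (x (k+1))) ≤ dist (x k) (x (k+1)) := hT _ (hxC k) _ (hxC (k+1))
    calc dist (x (k+1)) (x (k+2))
        ≤ dist (x (k+1)) (H.W u (T (x k)) (1 - lam (k+2)))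
          + dist (H.W u (T (x k)) (1 - lam (k+2))) (x (k+2)) := dist_triangle _ _ _
      _ ≤ |lam (k+2) - lam (k+1)| * dist u (T (x k))
          + ((1 - (1 - lam (k+2))) * dist u u
            + (1 - lam (k+2)) * dist (T (x k)) (T (x (k+1)))) := by
          refine add_le_add (le_of_eq ?_) ?_
          · rw [hiter k]; rw [h2, habs]
          · rw [hiter (k+1)]; exact h4
      _ ≤ (1 - lam (k+2)) * dist (x k) (x (k+1)) + M * |lam (k+2) - lam (k+1)| := by
          rw [dist_self]
          have hab := abs_nonneg (lam (k+2) - lam (k+1))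
          nlinarith [hmem2.1, hmem2.2]
  have key : ∀ j : ℕ, dist (x (N+j)) (x (N+j+1)) ≤
      M * ∏ k ∈ Finset.Icc (N+1) (N+j), (1 - lam (k+1))
      + M * ∑ k ∈ Finset.Icc (N+1) (N+j), |lam (k+1) - lam k| := by
    intro j
    induction j with
    | zero =>
      rw [Nat.add_zero, Finset.Icc_eq_empty (by omega), Finset.prod_empty, Finset.sum_empty]
      simpa using hdistM N (N+1)
    | succ j ih =>
      have hr := hrec (N + j)
      have hpt := Finset.prod_Icc_succ_top (show N+1 ≤ N+j+1 by omega)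
        (fun k => 1 - lam (k+1))
      have hst := Finset.sum_Icc_succ_top (show N+1 ≤ N+j+1 by omega)
        (fun k => |lam (k+1) - lam k|)
      have hP0 : 0 ≤ ∏ k ∈ Finset.Icc (N+1) (N+j), (1 - lam (k+1)) :=
        Finset.prod_nonneg (fun k _ => by linarith [hlam1 k])
      have hS0 : 0 ≤ ∑ k ∈ Finset.Icc (N+1) (N+j), |lam (k+1) - lam k| :=
        Finset.sum_nonneg (fun k _ => abs_nonneg _)
      have h1 : 0 ≤ 1 - lam (N+j+2) := by linarith [hlam1 (N+j+1)]
      have h2 : 1 - lam (N+j+2) ≤ 1 := by linarith [hlam0 (N+j+1)]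
      have hmul := mul_le_mul_of_nonneg_left ih h1
      have he : N+j+1+1 = N+j+2 := rfl
      rw [he] at hpt hst
      show dist (x (N+j+1)) (x (N+j+1+1)) ≤
          M * ∏ k ∈ Finset.Icc (N+1) (N+j+1), (1 - lam (k+1))
          + M * ∑ k ∈ Finset.Icc (N+1) (N+j+1), |lam (k+1) - lam k|
      rw [hpt, hst]
      have hab := abs_nonneg (lam (N+j+2) - lam (N+j+1))
      have hMS0 : 0 ≤ (M:ℝ) * ∑ k ∈ Finset.Icc (N+1) (N+j), |lam (k+1) - lam k| :=
        mul_nonneg hMpos.le hS0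
      have hq : (1 - lam (N+j+2)) * ((M:ℝ) * ∏ k ∈ Finset.Icc (N+1) (N+j), (1 - lam (k+1))
            + M * ∑ k ∈ Finset.Icc (N+1) (N+j), |lam (k+1) - lam k|)
          ≤ M * ((∏ k ∈ Finset.Icc (N+1) (N+j), (1 - lam (k+1))) * (1 - lam (N+j+2)))
            + M * ∑ k ∈ Finset.Icc (N+1) (N+j), |lam (k+1) - lam k| := by
        nlinarith [mul_nonneg hMS0 (hlam0 (N+j+1))]
      have hq2 : (M:ℝ) * (∑ k ∈ Finset.Icc (N+1) (N+j), |lam (k+1) - lam k|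
            + |lam (N+j+2) - lam (N+j+1)|)
          = M * ∑ k ∈ Finset.Icc (N+1) (N+j), |lam (k+1) - lam k|
            + M * |lam (N+j+2) - lam (N+j+1)| := by ring
      linarith [hr, hmul, hq, hq2]
  -- Now the endgame
  have hθm := hθ m (by omega)
  have hθge : m ≤ θ m := by
    have hle : ∑ k ∈ Finset.Icc 1 (θ m), lam (k+1) ≤ (θ m : ℝ) := by
      calc ∑ k ∈ Finset.Icc 1 (θ m), lam (k+1)
          ≤ ∑ k ∈ Finset.Icc 1 (θ m), (1:ℝ) := Finset.sum_le_sum (fun k _ => hlam1 k)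
        _ = (θ m : ℝ) := by simp
    exact_mod_cast hθm.trans hle
  have hnN : N ≤ n := by omega
  obtain ⟨j, rfl⟩ : ∃ j, n = N + j := ⟨n - N, by omega⟩
  have hkey := key j
  set P := ∏ k ∈ Finset.Icc (N+1) (N+j), (1 - lam (k+1)) with hPdef
  set S := ∑ k ∈ Finset.Icc (N+1) (N+j), |lam (k+1) - lam k| with hSdef
  have hP0 : 0 ≤ P := Finset.prod_nonneg (fun k _ => by linarith [hlam1 k])
  have hS0 : 0 ≤ S := Finset.sum_nonneg (fun k _ => abs_nonneg _)
  -- bound S by δ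
  have hSle : S ≤ δ := by
    have hsub : S ≤ ∑ k ∈ Finset.Icc (β δ + 1) (N+j), |lam (k+1) - lam k| :=
      Finset.sum_le_sum_of_subset_of_nonneg
        (Finset.Icc_subset_Icc_left (by omega)) (fun k _ _ => abs_nonneg _)
    have hsplit : ∑ k ∈ Finset.Icc 1 (N+j), |lam (k+1) - lam k|
        = ∑ k ∈ Finset.Icc 1 (β δ), |lam (k+1) - lam k|
          + ∑ k ∈ Finset.Icc (β δ + 1) (N+j), |lam (k+1) - lam k| := by
      rw [show (1:ℕ) = 0 + 1 by rfl, Finset.Icc_add_one_left_eq_Ioc, show β δ + (0 + 1) = β δ + 1 from rfl, Finset.Icc_add_one_left_eq_Ioc (β δ)]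
      exact (Finset.sum_Ioc_consecutive (fun k => |lam (k + (0 + 1)) - lam k|) (m := 0) (n := β δ) (k := N + j) (by omega) (by omega)).symm
    have hb := hβ δ hδpos (N + j - β δ)
    rw [show β δ + (N + j - β δ) = N + j by omega] at hb
    linarith
  -- bound P by ε / (2M)
  have hL : Real.log (2*M/ε) ≤ ∑ k ∈ Finset.Icc (N+1) (N+j), lam (k+1) := by
    have h1 : (m:ℝ) ≤ ∑ k ∈ Finset.Icc 1 (N+j), lam (k+1) :=
      hθm.trans (Finset.sum_le_sum_of_subset_of_nonneg
        (Finset.Icc_subset_Icc_right (by omega)) (fun k _ _ => hlam0 k))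
    have h2 : ∑ k ∈ Finset.Icc 1 N, lam (k+1) ≤ (N:ℝ) := by
      calc ∑ k ∈ Finset.Icc 1 N, lam (k+1)
          ≤ ∑ k ∈ Finset.Icc 1 N, (1:ℝ) := Finset.sum_le_sum (fun k _ => hlam1 k)
        _ = (N : ℝ) := by simp
    have h3 : ∑ k ∈ Finset.Icc 1 (N+j), lam (k+1)
        = ∑ k ∈ Finset.Icc 1 N, lam (k+1) + ∑ k ∈ Finset.Icc (N+1) (N+j), lam (k+1) := by
      rw [show (1:ℕ) = 0 + 1 by rfl, Finset.Icc_add_one_left_eq_Ioc, show N + (0 + 1) = N + 1 from rfl, Finset.Icc_add_one_left_eq_Ioc N]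
      exact (Finset.sum_Ioc_consecutive _ (m := 0) (n := N) (k := N + j) (by omega) (by omega)).symm
    have h4 : Real.log (2*M/ε) ≤ (c:ℝ) := Nat.le_ceil _
    have h5 : (m:ℝ) = (N:ℝ) + (c:ℝ) := by rw [hmdef, hNdef]; push_cast; ring
    linarith
  have hPle : P ≤ ε / (2*M) := by
    have hexp : P ≤ Real.exp (-(∑ k ∈ Finset.Icc (N+1) (N+j), lam (k+1))) := by
      rw [← Finset.sum_neg_distrib, Real.exp_sum]
      exact Finset.prod_le_prod (fun k _ => by linarith [hlam1 k])
        (fun k _ => by linarith [Real.add_one_le_exp (-(lam (k+1)))])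
    have h2M : (0:ℝ) < 2*M/ε := by positivity
    have hmono : Real.exp (-(∑ k ∈ Finset.Icc (N+1) (N+j), lam (k+1)))
        ≤ Real.exp (-(Real.log (2*M/ε))) := Real.exp_le_exp.mpr (by linarith)
    have heq : Real.exp (-(Real.log (2*↑M/ε))) = ε/(2*M) := by
      rw [Real.exp_neg, Real.exp_log h2M, inv_div]
    linarith
  have hMδ : (M:ℝ) * δ = ε / 4 := by
    rw [hδdef]; field_simp
  have hMP : (M:ℝ) * P ≤ ε / 2 := by
    have := mul_le_mul_of_nonneg_left hPle hMpos.le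
    rw [show (M:ℝ) * (ε / (2*M)) = ε / 2 by field_simp] at this
    exact this
  have hMS : (M:ℝ) * S ≤ ε / 4 := by
    have := mul_le_mul_of_nonneg_left hSle hMpos.le
    linarith [hMδ]
  linarith
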